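/- Assume V is finite and nonempty, E is strongly connected, and λ is a multiplier function on V. Suppose 𝓛 is the minimum of the average cycle multipliers over all simple cycles; that is, some simple cycle has average cycle multiplier equal to 𝓛, and every simple cycle has average cycle multiplier at least 𝓛. Then for every L > 0: a family of consistent handicaps for L exists if and only if L ≤ 𝓛. -/

import Mathlib

/-- `c` is a cycle of length `n` in the directed graph with edge relation `E`. -/
def IsCycle {V : Type*} (E : V → V → Prop) (n : ℕ) (c : Fin (n + 1) → V) : Prop :=
  c (Fin.last n) = c 0 ∧ ∀ i : Fin n, E (c i.castSucc) (c i.succ)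

/-- The cycle `c` of length `n` is simple, i.e. its first `n` vertices are
pairwise distinct. -/
def IsSimpleCycle {V : Type*} (n : ℕ) (c : Fin (n + 1) → V) : Prop :=
  ∀ i j : Fin n, c i.castSucc = c j.castSucc → i = j

/-- The cycle multiplier of a cycle of length `n`. -/
def cycleMult {V : Type*} (lam : V → ℝ) (n : ℕ) (c : Fin (n + 1) → V) : ℝ :=
  ∏ i : Fin n, lam (c i.castSucc)

lemma map_prod_eq_fin_prod {α : Type*} (f : α → ℝ) (l : List α) :
    (l.map f).prod = ∏ i : Fin l.length, f (l.get i) := by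
  induction l with
  | nil => simp
  | cons a t ih =>
    rw [List.map_cons, List.prod_cons, ih]
    exact (Fin.prod_univ_succ fun i : Fin (t.length + 1) => f ((a :: t).get i)).symm

lemma simple_cycle_bound {V : Type*} (E : V → V → Prop) (lam : V → ℝ) (L : ℝ)
    (hcyc : ∀ n : ℕ, 1 ≤ n → ∀ c : Fin (n + 1) → V,
      IsCycle E n c → IsSimpleCycle n c → L ^ n ≤ cycleMult lam n c)
    (b : List V) (x : V) (hnd : (x :: b).Nodup)
    (hch : List.Chain' E (x :: b ++ [x])) :
    L ^ (b.length + 1) ≤ ((x :: b).map lam).prod := by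
  set m : List V := x :: b with hm
  set n : ℕ := b.length + 1 with hn
  have hml : m.length = n := rfl
  set l : List V := m ++ [x] with hl
  have hll : l.length = n + 1 := by simp [hl, hml]
  set c : Fin (n + 1) → V := fun i => l.get (Fin.cast hll.symm i) with hc
  have hget : ∀ (i : ℕ) (h1 : i < l.length) (h2 : i < m.length),
      l.get ⟨i, h1⟩ = m.get ⟨i, h2⟩ := by
    intro i h1 h2
    simp only [hl, List.get_eq_getElem]
    exact List.getElem_append_left h2
  have hcm : ∀ i : Fin n, c i.castSucc = m.get (Fin.cast hml.symm i) := by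
    intro i
    exact hget i.val _ _
  have hchain : List.Chain' E l := by
    simpa [hl, hm] using hch
  have hcycle : IsCycle E n c := by
    constructor
    · show l.get _ = l.get _
      have h0 : l.get (Fin.cast hll.symm 0) = x := by
        simp [hl, hm]
      have hlast : l.get (Fin.cast hll.symm (Fin.last n)) = x := by
        rw [show (Fin.cast hll.symm (Fin.last n)) = ⟨m.length, by simp [hll, hml]⟩ from rfl]
        simp [hl]
      rw [h0, hlast]
    · intro i
      simp only [List.Chain', List.isChain_iff_getElem] at hchain
      have hi : (i : ℕ) < l.length - 1 := by rw [hll]; simpa using i.isLt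
      exact hchain i (by omega)
  have hsimple : IsSimpleCycle n c := by
    intro i j hij
    rw [hcm i, hcm j] at hij
    have h2 := (List.nodup_iff_injective_get.mp hnd) hij
    exact Fin.ext (congrArg Fin.val h2)
  have hprod : cycleMult lam n c = (m.map lam).prod := by
    rw [map_prod_eq_fin_prod]
    refine Eq.symm (Fintype.prod_equiv (finCongr hml) _ _ fun i => ?_)
    rw [hcm (finCongr hml i)]
    rfl
  have := hcyc n (by omega) c hcycle hsimple
  rw [hprod] at this
  exact this
lemma dup_split {V : Type*} {l : List V} (h : ¬ l.Nodup) :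
    ∃ (x : V) (l₁ l₂ l₃ : List V), l = l₁ ++ x :: l₂ ++ x :: l₃ := by
  induction l with
  | nil => simp at h
  | cons a t ih =>
    by_cases ha : a ∈ t
    · obtain ⟨s, u, rfl⟩ := List.append_of_mem ha
      exact ⟨a, [], s, u, rfl⟩
    · have ht : ¬ t.Nodup := by simpa [List.nodup_cons, ha] using h
      obtain ⟨x, l₁, l₂, l₃, rfl⟩ := ih ht
      exact ⟨x, a :: l₁, l₂, l₃, rfl⟩

lemma splice {V : Type*} {E : V → V → Prop} {l₁ l₂ l₃ : List V} {x : V}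
    (h : List.Chain' E (l₁ ++ x :: l₂ ++ x :: l₃)) :
    List.Chain' E (l₁ ++ x :: l₃) ∧ List.Chain' E (x :: l₂ ++ [x]) := by
  have h' : List.Chain' E (l₁ ++ x :: (l₂ ++ x :: l₃)) := by simpa using h
  rw [List.Chain', List.isChain_split] at h'
  obtain ⟨h1, h2⟩ := h'
  have h2' : List.Chain' E ((x :: l₂) ++ x :: l₃) := by simpa [List.Chain'] using h2
  rw [List.Chain', List.isChain_split] at h2'
  exact ⟨List.isChain_split.mpr ⟨h1, h2'.2⟩, by simpa [List.Chain'] using h2'.1⟩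
lemma list_cycle_bound {V : Type*} (E : V → V → Prop) (lam : V → ℝ)
    (hlam : ∀ v, 0 < lam v) (L : ℝ) (hL : 0 < L)
    (hcyc : ∀ n : ℕ, 1 ≤ n → ∀ c : Fin (n + 1) → V,
      IsCycle E n c → IsSimpleCycle n c → L ^ n ≤ cycleMult lam n c) :
    ∀ (b : List V) (x : V), List.Chain' E (x :: b ++ [x]) →
      L ^ (b.length + 1) ≤ ((x :: b).map lam).prod := by
  suffices H : ∀ (N : ℕ) (b : List V) (x : V), b.length ≤ N →
      List.Chain' E (x :: b ++ [x]) → L ^ (b.length + 1) ≤ ((x :: b).map lam).prod from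
    fun b x h => H b.length b x le_rfl h
  intro N
  induction N with
  | zero =>
    intro b x hb hch
    have hb0 : b = [] := List.length_eq_zero_iff.mp (Nat.le_zero.mp hb)
    subst hb0
    exact simple_cycle_bound E lam L hcyc [] x (by simp) hch
  | succ N ih =>
    intro b x hb hch
    by_cases hnd : (x :: b).Nodup
    · exact simple_cycle_bound E lam L hcyc b x hnd hch
    · obtain ⟨y, l₁, l₂, l₃, hdec⟩ := dup_split hnd
      have hch' : List.Chain' E (l₁ ++ y :: l₂ ++ y :: (l₃ ++ [x])) := by
        have h9 : (x :: b) ++ [x] = l₁ ++ y :: l₂ ++ y :: (l₃ ++ [x]) := by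
          rw [hdec]; simp
        rw [← h9]; simpa using hch
      obtain ⟨hA, hB⟩ := splice hch'
      have hlen : 1 + b.length = l₁.length + l₂.length + l₃.length + 2 := by
        have := congrArg List.length hdec
        simpa [Nat.add_comm, Nat.add_left_comm, Nat.add_assoc] using this
      have ih2 : L ^ (l₂.length + 1) ≤ ((y :: l₂).map lam).prod :=
        ih l₂ y (by omega) hB
      have hp2 : (0:ℝ) < ((y :: l₂).map lam).prod :=
        List.prod_pos (by simp; exact ⟨hlam y, fun a _ => hlam a⟩)
      cases l₁ with
      | nil =>
        rw [List.nil_append] at hdec hA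
        rw [List.cons_append, List.cons_eq_cons] at hdec
        obtain ⟨hxy, hbb⟩ := hdec
        subst hxy
        subst hbb
        have hA' : List.Chain' E (x :: l₃ ++ [x]) := by simpa using hA
        have ih1 : L ^ (l₃.length + 1) ≤ ((x :: l₃).map lam).prod :=
          ih l₃ x (by simp at hb ⊢; omega) hA'
        have hexp : (l₂ ++ x :: l₃).length + 1 = (l₃.length + 1) + (l₂.length + 1) := by
          simp; omega
        rw [hexp, pow_add]
        have hprodeq : ((x :: (l₂ ++ x :: l₃)).map lam).prod
            = ((x :: l₃).map lam).prod * ((x :: l₂).map lam).prod := by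
          simp; ring
        rw [hprodeq]
        exact mul_le_mul ih1 ih2 (by positivity) (le_trans (by positivity) ih1)
      | cons a t =>
        obtain ⟨hxa, hbb⟩ : x = a ∧ b = t ++ (y :: l₂ ++ y :: l₃) := by
          rw [show a :: t ++ y :: l₂ ++ y :: l₃ = a :: (t ++ (y :: l₂ ++ y :: l₃)) by simp] at hdec
          rw [List.cons_eq_cons] at hdec; exact hdec
        subst hxa
        subst hbb
        have hA' : List.Chain' E (x :: (t ++ y :: l₃) ++ [x]) := by
          simpa using hA
        have ih1 : L ^ ((t ++ y :: l₃).length + 1) ≤ ((x :: (t ++ y :: l₃)).map lam).prod :=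
          ih (t ++ y :: l₃) x (by simp at hb ⊢; omega) hA'
        have hexp : (t ++ (y :: l₂ ++ y :: l₃)).length + 1
            = ((t ++ y :: l₃).length + 1) + (l₂.length + 1) := by
          simp; omega
        rw [hexp, pow_add]
        have hprodeq : ((x :: (t ++ (y :: l₂ ++ y :: l₃))).map lam).prod
            = ((x :: (t ++ y :: l₃)).map lam).prod * ((y :: l₂).map lam).prod := by
          simp; ring
        rw [hprodeq]
        exact mul_le_mul ih1 ih2 (by positivity) (le_trans (by positivity) ih1)
lemma walk_bound {V : Type*} [Fintype V] [DecidableEq V] (E : V → V → Prop) (w : V → ℝ)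
    (hw : ∀ v, 0 < w v)
    (hcycw : ∀ (b : List V) (x : V), List.Chain' E (x :: b ++ [x]) →
      ((x :: b).map w).prod ≤ 1) :
    ∀ (l : List V) (v : V), List.Chain' E (l ++ [v]) →
      (l.map w).prod ≤ ∏ u : V, max 1 (w u) := by
  have hppos : ∀ (m : List V), (0:ℝ) < (m.map w).prod := by
    intro m
    apply List.prod_pos
    intro a ha
    simp only [List.mem_map] at ha
    obtain ⟨u, _, rfl⟩ := ha
    exact hw u
  suffices H : ∀ (N : ℕ) (l : List V), l.length ≤ N → ∀ v, List.Chain' E (l ++ [v]) →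
      (l.map w).prod ≤ ∏ u : V, max 1 (w u) from
    fun l v h => H l.length l le_rfl v h
  have hnodup : ∀ (l : List V), l.Nodup → (l.map w).prod ≤ ∏ u : V, max 1 (w u) := by
    intro l hnd
    calc (l.map w).prod = l.toFinset.prod w := (List.prod_toFinset w hnd).symm
      _ ≤ l.toFinset.prod (fun u => max 1 (w u)) :=
          Finset.prod_le_prod (fun i _ => (hw i).le) (fun i _ => le_max_right _ _)
      _ ≤ ∏ u : V, max 1 (w u) := by
          rw [← Finset.prod_sdiff (Finset.subset_univ l.toFinset)]
          have h1 : (1:ℝ) ≤ ∏ u ∈ Finset.univ \ l.toFinset, max 1 (w u) := by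
            have := Finset.prod_le_prod (s := Finset.univ \ l.toFinset)
              (f := fun _ => (1:ℝ)) (g := fun u => max 1 (w u))
              (fun i _ => zero_le_one) (fun i _ => le_max_left _ _)
            simpa using this
          have h2 : (0:ℝ) ≤ ∏ u ∈ l.toFinset, max 1 (w u) :=
            Finset.prod_nonneg fun i _ => le_trans zero_le_one (le_max_left _ _)
          exact le_mul_of_one_le_left h2 h1
  intro N
  induction N with
  | zero =>
    intro l hl v _
    have : l = [] := List.length_eq_zero_iff.mp (Nat.le_zero.mp hl)
    subst this
    exact hnodup [] (by simp)
  | succ N ih =>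
    intro l hl v hch
    by_cases hnd : l.Nodup
    · exact hnodup l hnd
    · obtain ⟨x, l₁, l₂, l₃, rfl⟩ := dup_split hnd
      have hch' : List.Chain' E (l₁ ++ x :: l₂ ++ x :: (l₃ ++ [v])) := by
        simpa using hch
      obtain ⟨hA, hB⟩ := splice hch'
      have hA' : List.Chain' E ((l₁ ++ x :: l₃) ++ [v]) := by simpa using hA
      have h1 := ih (l₁ ++ x :: l₃) (by simp at hl ⊢; omega) v hA'
      have h2 := hcycw l₂ x hB
      have hprod : (((l₁ ++ x :: l₂ ++ x :: l₃)).map w).prod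
          = ((l₁ ++ x :: l₃).map w).prod * ((x :: l₂).map w).prod := by
        simp; ring
      rw [hprod]
      calc ((l₁ ++ x :: l₃).map w).prod * ((x :: l₂).map w).prod
          ≤ ((l₁ ++ x :: l₃).map w).prod * 1 :=
            mul_le_mul_of_nonneg_left h2 (hppos _).le
        _ = ((l₁ ++ x :: l₃).map w).prod := mul_one _
        _ ≤ ∏ u : V, max 1 (w u) := h1
/-- If `𝓛` is the minimum average cycle multiplier over all simple cycles,
then for every `L > 0`, consistent handicaps for `L` exist iff `L ≤ 𝓛`. -/
theorem consistent_handicaps_iff_le_min_avg_cycle_multiplier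
    {V : Type*} [Fintype V] [Nonempty V]
    (E : V → V → Prop) (hsc : ∀ u v : V, Relation.ReflTransGen E u v)
    (lam : V → ℝ) (hlam : ∀ v, 0 < lam v)
    (𝓛 : ℝ)
    (hmin_ex : ∃ n : ℕ, 1 ≤ n ∧ ∃ c : Fin (n + 1) → V,
        IsCycle E n c ∧ IsSimpleCycle n c ∧
        (cycleMult lam n c) ^ ((1 : ℝ) / n) = 𝓛)
    (hmin_le : ∀ n : ℕ, 1 ≤ n → ∀ c : Fin (n + 1) → V,
        IsCycle E n c → IsSimpleCycle n c →
        𝓛 ≤ (cycleMult lam n c) ^ ((1 : ℝ) / n))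
    (L : ℝ) (hL : 0 < L) :
    (∃ φ : V → ℝ, (∀ v, 0 < φ v) ∧ ∀ k j, E k j → φ j * lam k ≥ L * φ k) ↔ L ≤ 𝓛 := by
  classical
  constructor
  · rintro ⟨φ, hφpos, hφ⟩
    obtain ⟨n, hn, c, hcyc, hsimp, hmult⟩ := hmin_ex
    rw [← hmult]
    have hcm : 0 < cycleMult lam n c := Finset.prod_pos fun i _ => hlam _
    have key : L ^ n ≤ cycleMult lam n c := by
      have hstep : ∀ i : Fin n, L * φ (c i.castSucc) ≤ φ (c i.succ) * lam (c i.castSucc) :=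
        fun i => hφ _ _ (hcyc.2 i)
      have hprod : ∏ i : Fin n, (L * φ (c i.castSucc)) ≤
          ∏ i : Fin n, (φ (c i.succ) * lam (c i.castSucc)) :=
        Finset.prod_le_prod (fun i _ => mul_nonneg hL.le (hφpos _).le) (fun i _ => hstep i)
      rw [Finset.prod_mul_distrib, Finset.prod_mul_distrib, Finset.prod_const] at hprod
      have hPQ : ∏ i : Fin n, φ (c i.succ) = ∏ i : Fin n, φ (c i.castSucc) := by
        have h1 := Fin.prod_univ_castSucc (fun i : Fin (n + 1) => φ (c i))
        have h2 := Fin.prod_univ_succ (fun i : Fin (n + 1) => φ (c i))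
        have h3 : φ (c (Fin.last n)) = φ (c 0) := by rw [hcyc.1]
        have hφ0 : φ (c 0) ≠ 0 := (hφpos _).ne'
        have h4 : φ (c 0) * ∏ i : Fin n, φ (c i.succ)
            = φ (c 0) * ∏ i : Fin n, φ (c i.castSucc) := by
          rw [← h2, h1, h3]; ring
        exact mul_left_cancel₀ hφ0 h4
      rw [hPQ, Finset.card_univ, Fintype.card_fin] at hprod
      have hP : 0 < ∏ i : Fin n, φ (c i.castSucc) := Finset.prod_pos fun i _ => hφpos _
      show L ^ n ≤ ∏ i : Fin n, lam (c i.castSucc)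
      exact le_of_mul_le_mul_right (by linarith [hprod]) hP
    have hn0 : (n : ℝ) ≠ 0 := Nat.cast_ne_zero.mpr (by omega)
    calc L = (L ^ n) ^ ((1 : ℝ) / n) := by
          rw [← Real.rpow_natCast L n, ← Real.rpow_mul hL.le]
          rw [mul_one_div, div_self hn0, Real.rpow_one]
      _ ≤ (cycleMult lam n c) ^ ((1 : ℝ) / n) :=
          Real.rpow_le_rpow (by positivity) key (by positivity)
  · intro hLL
    have hcycpow : ∀ n : ℕ, 1 ≤ n → ∀ c : Fin (n + 1) → V, IsCycle E n c →
        IsSimpleCycle n c → L ^ n ≤ cycleMult lam n c := by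
      intro n hn c hc hs
      have h1 := hmin_le n hn c hc hs
      have hcm : 0 < cycleMult lam n c := Finset.prod_pos fun i _ => hlam _
      have hn0 : (n : ℝ) ≠ 0 := Nat.cast_ne_zero.mpr (by omega)
      have h2 : L ≤ (cycleMult lam n c) ^ ((1 : ℝ) / n) := le_trans hLL h1
      calc L ^ n = (L : ℝ) ^ (n : ℝ) := (Real.rpow_natCast L n).symm
        _ ≤ ((cycleMult lam n c) ^ ((1 : ℝ) / n)) ^ (n : ℝ) :=
            Real.rpow_le_rpow hL.le h2 (Nat.cast_nonneg n)
        _ = cycleMult lam n c := by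
            rw [← Real.rpow_mul hcm.le, one_div_mul_cancel hn0, Real.rpow_one]
    set w : V → ℝ := fun v => L / lam v with hwdef
    have hwpos : ∀ v, 0 < w v := fun v => div_pos hL (hlam v)
    have hdivprod : ∀ (m : List V), (m.map w).prod = L ^ m.length / (m.map lam).prod := by
      intro m
      induction m with
      | nil => simp
      | cons a t iht =>
        have h1 : (0:ℝ) < (t.map lam).prod := by
          apply List.prod_pos; intro r hr
          simp only [List.mem_map] at hr; obtain ⟨u, _, rfl⟩ := hr; exact hlam u
        rw [List.map_cons, List.prod_cons, iht, List.map_cons, List.prod_cons]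
        rw [List.length_cons, pow_succ]
        simp only [hwdef]
        rw [div_mul_div_comm]
        ring_nf
    have hcycw : ∀ (b : List V) (x : V), List.Chain' E (x :: b ++ [x]) →
        ((x :: b).map w).prod ≤ 1 := by
      intro b x hch
      have h1 := list_cycle_bound E lam hlam L hL hcycpow b x hch
      have h2 : (0:ℝ) < ((x :: b).map lam).prod := by
        apply List.prod_pos; intro r hr
        simp only [List.mem_map] at hr; obtain ⟨u, _, rfl⟩ := hr; exact hlam u
      rw [hdivprod]
      rw [div_le_one h2]
      simpa using h1
    set B : ℝ := ∏ u : V, max 1 (w u) with hB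
    have hbdd : ∀ (l : List V) (v : V), List.Chain' E (l ++ [v]) → (l.map w).prod ≤ B :=
      walk_bound E w hwpos hcycw
    set S : V → Set ℝ := fun v => {r | ∃ l : List V, List.Chain' E (l ++ [v]) ∧ (l.map w).prod = r}
      with hS
    have hne : ∀ v, (1:ℝ) ∈ S v := fun v => ⟨[], List.isChain_singleton v, by simp⟩
    have hbdd' : ∀ v, BddAbove (S v) := by
      intro v
      refine ⟨B, ?_⟩
      rintro r ⟨l, hl, rfl⟩
      exact hbdd l v hl
    set φ : V → ℝ := fun v => sSup (S v) with hφ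
    have hφ1 : ∀ v, 1 ≤ φ v := fun v => le_csSup (hbdd' v) (hne v)
    refine ⟨φ, fun v => lt_of_lt_of_le one_pos (hφ1 v), ?_⟩
    intro k j hkj
    have hstep : ∀ r ∈ S k, w k * r ∈ S j := by
      rintro r ⟨l, hl, rfl⟩
      refine ⟨l ++ [k], ?_, by simp [mul_comm]⟩
      have : l ++ [k] ++ [j] = l ++ k :: [j] := by simp
      rw [this, List.Chain', List.isChain_split]
      exact ⟨hl, List.isChain_pair.mpr hkj⟩
    have hkle : φ k ≤ φ j / w k := by
      apply csSup_le ⟨1, hne k⟩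
      intro r hr
      have h5 : w k * r ≤ φ j := le_csSup (hbdd' j) (hstep r hr)
      rw [le_div_iff₀ (hwpos k)]
      linarith [h5]
    have h6 : w k * φ k ≤ φ j := by
      rw [← le_div_iff₀' (hwpos k)] at *
      exact hkle
    rw [ge_iff_le]
    have h7 : w k * lam k = L := div_mul_cancel₀ L (hlam k).ne'
    calc L * φ k = (w k * φ k) * lam k := by rw [mul_comm (w k * φ k) (lam k), ← mul_assoc, mul_comm (lam k) (w k), h7]
      _ ≤ φ j * lam k := mul_le_mul_of_nonneg_right h6 (hlam k).le
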